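/- Let p be an odd prime and let k, n be integers with 6 ≤ 2k ≤ n and n ≤ p/k + (k+1)/2 (inequality of rational numbers). Take α_i = i−1 ∈ F_p for 1 ≤ i ≤ n and r = 1. Then every k×k submatrix of the corresponding matrix G_1 is nonsingular, and the code C_1 generated by G_1 is an [n+1,k] MDS code over F_p that is not monomially equivalent to any GRS code of length n+1 over F_p. -/

import Mathlib

open Finset Matrix

/-- Elementary symmetric polynomial `σ_t` evaluated at the values `x 0, …, x (m-1)`. -/
def esymmV {F : Type*} [CommRing F] {m : ℕ} (t : ℕ) (x : Fin m → F) : F :=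
  ∑ A ∈ Finset.univ.powersetCard t, ∏ i ∈ A, x i

/-- Complete homogeneous symmetric polynomial `S_t` evaluated at `x 0, …, x (m-1)`. -/
def hsymmV {F : Type*} [CommRing F] {m : ℕ} (t : ℕ) (x : Fin m → F) : F :=
  ∑ d ∈ Finset.Nat.antidiagonalTuple m t, ∏ i, x i ^ d i

/-- The exponent of the `i`-th row (0-indexed): the elements of
`{0,…,k−r−1} ∪ {k−r+1,…,k}` in increasing order. -/
def expo (k r : ℕ) (i : Fin k) : ℕ := if (i : ℕ) < k - r then (i : ℕ) else (i : ℕ) + 1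

/-- The Vandermonde product `∏_{i<j} (α_j − α_i)`. -/
def vand {F : Type*} [CommRing F] {n : ℕ} (α : Fin n → F) : F :=
  ∏ i : Fin n, ∏ j ∈ Finset.Ioi i, (α j - α i)

/-- The matrix `G_{r,k}`: rows are `(α_1^e, …, α_n^e)` for
`e ∈ {0,…,k−r−1} ∪ {k−r+1,…,k}` in increasing order. -/
def Grk {F : Type*} [Field F] {n : ℕ} (α : Fin n → F) (k r : ℕ) : Matrix (Fin k) (Fin n) F :=
  Matrix.of fun i j => α j ^ expo k r i

/-- The matrix `G_1`: `G_{r,k}` with the extra column `(0,…,0,1)ᵀ` appended. -/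
def G1 {F : Type*} [Field F] {n : ℕ} (α : Fin n → F) (k r : ℕ) :
    Matrix (Fin k) (Fin (n + 1)) F :=
  Matrix.of fun i j =>
    if hj : (j : ℕ) < n then α ⟨j, hj⟩ ^ expo k r i
    else if (i : ℕ) = k - 1 then 1 else 0

/-- The matrix `G_2`: `G_1` with the extra column `(0,…,0,1,δ)ᵀ` appended
(entry `1` in row `k−1`, i.e. index `k−2`, and `δ` in row `k`, i.e. index `k−1`). -/
def G2 {F : Type*} [Field F] {n : ℕ} (α : Fin n → F) (k r : ℕ) (δ : F) :
    Matrix (Fin k) (Fin (n + 2)) F :=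
  Matrix.of fun i j =>
    if hj : (j : ℕ) < n then α ⟨j, hj⟩ ^ expo k r i
    else if (j : ℕ) = n then (if (i : ℕ) = k - 1 then 1 else 0)
    else (if (i : ℕ) = k - 2 then 1 else if (i : ℕ) = k - 1 then δ else 0)

/-- `u_i = ∏_{j ≠ i} (α_i − α_j)⁻¹`. -/
def uCoef {F : Type*} [Field F] {n : ℕ} (α : Fin n → F) (i : Fin n) : F :=
  ∏ j ∈ Finset.univ.erase i, (α i - α j)⁻¹

/-- `Λ_{r,i} = ∑_{j=0}^{r} (−1)^j σ_j α_i^{(n−k)+(r−1)−j}`. -/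
def Lam {F : Type*} [Field F] {n : ℕ} (α : Fin n → F) (k r : ℕ) (i : Fin n) : F :=
  ∑ j ∈ Finset.range (r + 1), (-1 : F) ^ j * esymmV j α * α i ^ ((n - k) + (r - 1) - j)

/-- Every `k×k` submatrix of `G` is nonsingular. -/
def allSubNonsing {F : Type*} [Field F] {k m : ℕ} (G : Matrix (Fin k) (Fin m) F) : Prop :=
  ∀ c : Fin k → Fin m, Function.Injective c → (G.submatrix id c).det ≠ 0

/-- The linear code spanned by the rows of `G`. -/
def rowSpan {F : Type*} [Field F] {k m : ℕ} (G : Matrix (Fin k) (Fin m) F) :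
    Submodule F (Fin m → F) :=
  Submodule.span F (Set.range fun i => G i)

/-- The dual code `C^⊥ = {x : ∑ x_i c_i = 0 for all c ∈ C}`, as a set. -/
def dualSet {F : Type*} [Field F] {m : ℕ} (C : Set (Fin m → F)) : Set (Fin m → F) :=
  {x | ∀ c ∈ C, ∑ i, x i * c i = 0}

/-- The extended code of `C` with respect to `w`. -/
def extCode {F : Type*} [Field F] {m : ℕ} (C : Set (Fin m → F)) (w : Fin m → F) :
    Set (Fin (m + 1) → F) :=
  {y | ∃ c ∈ C, (∀ i : Fin m, y (Fin.castSucc i) = c i) ∧ y (Fin.last m) = ∑ i, w i * c i}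

/-- `C` is a GRS code of length `m` and dimension `kk` over `F`:
evaluation points are pairwise distinct elements of `F ∪ {∞}` (with `∞ = none`),
the multipliers `v i` are nonzero, and `f(∞)` is the coefficient of `x^(kk−1)`. -/
def isGRS {F : Type*} [Field F] (m kk : ℕ) (C : Set (Fin m → F)) : Prop :=
  ∃ (β : Fin m → Option F) (v : Fin m → F),
    Function.Injective β ∧ (∀ i, v i ≠ 0) ∧
    C = {c | ∃ f : Polynomial F, f.degree < (kk : WithBot ℕ) ∧
      ∀ i, c i = v i * (match β i with
        | some x => Polynomial.eval x f
        | none => f.coeff (kk - 1))}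

/-- Monomial equivalence of codes. -/
def monEquiv {F : Type*} [Field F] {m : ℕ} (C C' : Set (Fin m → F)) : Prop :=
  ∃ (π : Equiv.Perm (Fin m)) (lam : Fin m → F),
    (∀ i, lam i ≠ 0) ∧ C' = {y | ∃ c ∈ C, ∀ i, y i = lam i * c (π i)}


namespace RLaux
open Polynomial

variable {F : Type*} [Field F]

/-- polynomial from coefficient vector -/
noncomputable def polyOf {t : ℕ} (u : Fin t → F) : F[X] :=
  ∑ e : Fin t, C (u e) * X ^ (e : ℕ)

lemma polyOf_coeff {t : ℕ} (u : Fin t → F) (d : ℕ) :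
    (polyOf u).coeff d = if h : d < t then u ⟨d, h⟩ else 0 := by
  rw [polyOf, finset_sum_coeff]
  simp only [coeff_C_mul, coeff_X_pow]
  split
  · next h =>
    rw [Finset.sum_eq_single (⟨d, h⟩ : Fin t)]
    · simp
    · intro b _ hb
      have : ¬ (d = (b : ℕ)) := fun hc => hb (by aesop)
      simp [this]
    · simp
  · next h =>
    apply Finset.sum_eq_zero
    intro b _
    have : ¬ (d = (b : ℕ)) := fun hc => h (hc ▸ b.isLt)
    simp [this]

lemma polyOf_eval {t : ℕ} (u : Fin t → F) (x : F) :
    (polyOf u).eval x = ∑ e : Fin t, u e * x ^ (e : ℕ) := by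
  simp [polyOf, eval_finset_sum]

lemma polyOf_degree_lt_of {t t' : ℕ} (u : Fin t → F) (ht' : 0 < t')
    (h : ∀ d : Fin t, t' ≤ (d : ℕ) → u d = 0) : (polyOf u).degree < t' := by
  rw [degree_lt_iff_coeff_zero]
  intro m hm
  rw [polyOf_coeff]
  split
  · next hh => exact h _ (by exact_mod_cast hm)
  · rfl

lemma polyOf_degree_lt {t : ℕ} (u : Fin t → F) (ht : 0 < t) : (polyOf u).degree < t :=
  polyOf_degree_lt_of u ht (fun d hd => absurd d.isLt (by omega))

lemma polyOf_eq_zero_iff {t : ℕ} (u : Fin t → F) : polyOf u = 0 ↔ u = 0 := by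
  constructor
  · intro h
    funext d
    have := polyOf_coeff u d
    rw [h] at this
    simpa [d.isLt] using this.symm
  · intro h; simp [polyOf, h]

/-- reindexing sums over a sparse-exponent coefficient vector -/
lemma sum_reindex {t s : ℕ} (e : Fin t → Fin s) (he : Function.Injective e)
    (u : Fin t → F) (u' : Fin s → F) (h1 : ∀ i, u' (e i) = u i)
    (h2 : ∀ d : Fin s, (∀ i, e i ≠ d) → u' d = 0) (φ : Fin s → F) :
    ∑ d : Fin s, u' d * φ d = ∑ i : Fin t, u i * φ (e i) := by
  have h3 : ∑ i : Fin t, u i * φ (e i) = ∑ d ∈ Finset.univ.image e, u' d * φ d := by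
    rw [Finset.sum_image (fun a _ b _ hab => he hab)]
    exact Finset.sum_congr rfl fun i _ => by rw [h1]
  rw [h3]
  refine (Finset.sum_subset (Finset.subset_univ _) ?_).symm
  intro d _ hd
  have hne : ∀ i, e i ≠ d := by
    intro i hi
    exact hd (Finset.mem_image.2 ⟨i, Finset.mem_univ _, hi⟩)
  rw [h2 d hne, zero_mul]

/-- top coefficient of a product -/
lemma coeff_mul_top {f g : F[X]} {a b : ℕ} (hf : f.natDegree ≤ a) (hg : g.natDegree ≤ b) :
    (f * g).coeff (a + b) = f.coeff a * g.coeff b := by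
  rw [coeff_mul]
  rw [Finset.sum_eq_single ((a : ℕ), (b : ℕ))]
  · intro p hp hne
    rw [Finset.HasAntidiagonal.mem_antidiagonal] at hp
    rcases lt_or_gt_of_ne (fun hc : p.1 = a => hne (by aesop)) with h | h
    · have h2 : g.natDegree < p.2 := by omega
      rw [coeff_eq_zero_of_natDegree_lt h2, mul_zero]
    · have h2 : f.natDegree < p.1 := by omega
      rw [coeff_eq_zero_of_natDegree_lt h2, zero_mul]
  · intro h
    simp at h


/-- sum of distinct naturals lower bound -/
lemma sum_distinct_lower (S : Finset ℕ) : S.card * (S.card - 1) ≤ 2 * ∑ x ∈ S, x := by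
  classical
  induction S using Finset.strongInduction with
  | _ S ih =>
    rcases Finset.eq_empty_or_nonempty S with rfl | hS
    · simp
    · set m := S.max' hS with hm
      have hmem : m ∈ S := S.max'_mem hS
      have hsub : S ⊆ Finset.range (m + 1) := by
        intro x hx
        exact Finset.mem_range.2 (Nat.lt_succ_of_le (S.le_max' x hx))
      have hcard : S.card ≤ m + 1 := le_trans (Finset.card_le_card hsub) (by simp)
      have hudal := ih (S.erase m) (Finset.erase_ssubset hmem)
      have hce : (S.erase m).card = S.card - 1 := Finset.card_erase_of_mem hmem
      rw [hce] at hudal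
      have hsum : ∑ x ∈ S, x = m + ∑ x ∈ S.erase m, x := (Finset.add_sum_erase _ _ hmem).symm
      rw [hsum]
      have h1 : S.card - 1 ≤ m := by omega
      have key : ∀ c : ℕ, c * (c - 1) = (c - 1) * (c - 1 - 1) + 2 * (c - 1) := by
        intro c
        rcases c with _ | c
        · rfl
        · rcases c with _ | c
          · rfl
          · simp only [Nat.succ_sub_one]
            ring
      linarith [key S.card]

/-- key nonvanishing of subset sums -/
lemma subset_sum_ne_zero (p k n : ℕ) [Fact p.Prime] (hk : 3 ≤ k) (hkn : 2 * k ≤ n)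
    (hstrict : 2 * (k * n) < 2 * p + (k * k + k))
    (x : Fin k → ℕ) (hinj : Function.Injective x) (hlt : ∀ j, x j < n) :
    ((∑ j, x j : ℕ) : ZMod p) ≠ 0 := by
  set s := ∑ j, x j with hs
  set T : Finset ℕ := Finset.univ.image x with hT
  have hTcard : T.card = k := by
    rw [hT, Finset.card_image_of_injective _ hinj, Finset.card_univ, Fintype.card_fin]
  have hTsum : ∑ t ∈ T, t = s := by
    rw [hT, Finset.sum_image (fun a _ b _ hab => hinj hab)]
  have hTsub : T ⊆ Finset.range n := by
    intro t ht
    rw [hT] at ht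
    obtain ⟨j, _, rfl⟩ := Finset.mem_image.1 ht
    exact Finset.mem_range.2 (hlt j)
  -- lower bound
  have hlow : k * (k - 1) ≤ 2 * s := by
    have := sum_distinct_lower T
    rwa [hTcard, hTsum] at this
  have hspos : 0 < s := by
    have h6 : 3 * 2 ≤ k * (k - 1) := Nat.mul_le_mul (show 3 ≤ k by omega) (show 2 ≤ k - 1 by omega)
    omega
  -- upper bound
  have hcompl : ∑ t ∈ Finset.range n \ T, t + s = ∑ t ∈ Finset.range n, t := by
    rw [← hTsum]
    exact Finset.sum_sdiff hTsub
  have hclow : (n - k) * (n - k - 1) ≤ 2 * ∑ t ∈ Finset.range n \ T, t := by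
    have := sum_distinct_lower (Finset.range n \ T)
    rwa [Finset.card_sdiff_of_subset hTsub, Finset.card_range, hTcard] at this
  have hrange : 2 * ∑ t ∈ Finset.range n, t = n * (n - 1) := by
    rw [mul_comm, Finset.sum_range_id_mul_two]
  -- identity: (n-k)*(n-k-1) + 2*k*n = n*(n-1) + k*k + k
  have hident : (n - k) * (n - k - 1) + 2 * (k * n) = n * (n - 1) + (k * k + k) := by
    obtain ⟨e, he⟩ : ∃ e, n = e + k + 1 := ⟨n - k - 1, by omega⟩
    subst he
    have e1 : e + k + 1 - k = e + 1 := by omega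
    have e2 : e + 1 - 1 = e := by omega
    have e3 : e + k + 1 - 1 = e + k := by omega
    rw [e1, e2, e3]
    ring
  have hup : 2 * s < 2 * p := by nlinarith
  have hsltp : s < p := by omega
  intro hzero
  rw [ZMod.natCast_eq_zero_iff] at hzero
  have := Nat.le_of_dvd hspos hzero
  omega


lemma strict_bound (p k n : ℕ) [hp : Fact p.Prime] (hk : 3 ≤ k) (hkn : 2 * k ≤ n)
    (hbound : (n : ℚ) ≤ (p : ℚ) / (k : ℚ) + ((k : ℚ) + 1) / 2) :
    2 * (k * n) < 2 * p + (k * k + k) := by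
  have hk0 : (0 : ℚ) < (k : ℚ) := by exact_mod_cast (by omega : 0 < k)
  rw [div_add_div _ _ (ne_of_gt hk0) two_ne_zero, le_div_iff₀ (by positivity)] at hbound
  have hq : (n : ℚ) * (k * 2) ≤ (p : ℚ) * 2 + (k : ℚ) * ((k : ℚ) + 1) := hbound
  have hnat : n * (k * 2) ≤ p * 2 + k * (k + 1) := by exact_mod_cast hq
  have hle : 2 * (k * n) ≤ 2 * p + (k * k + k) := by nlinarith
  rcases Nat.lt_or_ge (2 * (k * n)) (2 * p + (k * k + k)) with h | h
  · exact h
  exfalso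
  have heq : 2 * (k * n) = 2 * p + (k * k + k) := le_antisymm hle h
  -- k < p
  have h1 : k * (2 * k) ≤ k * n := Nat.mul_le_mul_left k hkn
  have hkp : k < p := by nlinarith
  -- k ∣ 2p
  obtain ⟨c, hc⟩ : ∃ c, 2 * n = c + (k + 1) := ⟨2 * n - (k + 1), by omega⟩
  have hkc : k * c = 2 * p := by nlinarith
  have hdvd : k ∣ 2 * p := ⟨c, hkc.symm⟩
  have hnd : ¬ p ∣ k := fun hd => absurd (Nat.le_of_dvd (by omega) hd) (by omega)
  have hco : Nat.Coprime k p := ((Nat.Prime.coprime_iff_not_dvd hp.out).mpr hnd).symm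
  have := Nat.le_of_dvd (by omega) (hco.dvd_of_dvd_mul_right hdvd)
  omega


section MDS

variable {p : ℕ} [hpf : Fact p.Prime]

lemma cast_inj_lt {a b : ℕ} (ha : a < p) (hb : b < p) (h : ((a : ZMod p)) = (b : ZMod p)) :
    a = b := by
  have h1 : ((a : ZMod p)).val = a := ZMod.val_cast_of_lt ha
  have h2 : ((b : ZMod p)).val = b := ZMod.val_cast_of_lt hb
  rw [← h1, ← h2, h]

lemma part1 (k n : ℕ) (hk : 3 ≤ k) (hkn : 2 * k ≤ n)
    (hstrict : 2 * (k * n) < 2 * p + (k * k + k)) (hnp : n < p) :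
    allSubNonsing (G1 (fun i : Fin n => ((i : ℕ) : ZMod p)) k 1) := by
  set F := ZMod p
  set α : Fin n → F := fun i => ((i : ℕ) : F) with hα
  intro c hc hdet
  obtain ⟨v, hv0, hveq⟩ := Matrix.exists_vecMul_eq_zero_iff.mpr hdet
  have heq : ∀ j : Fin k, ∑ i : Fin k, v i * (G1 α k 1) i (c j) = 0 := by
    intro j
    have := congrFun hveq j
    simpa [Matrix.vecMul, dotProduct, Matrix.submatrix] using this
  have hexpo_lt : ∀ i : Fin k, expo k 1 i < k + 1 := by
    intro i
    have := i.isLt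
    unfold expo
    split <;> omega
  set u' : Fin (k + 1) → F := fun d =>
    if h : (d : ℕ) < k - 1 then v ⟨d, by omega⟩
    else if (d : ℕ) = k then v ⟨k - 1, by omega⟩ else 0 with hu'
  set e : Fin k → Fin (k + 1) := fun i => ⟨expo k 1 i, hexpo_lt i⟩ with he'
  have he : Function.Injective e := by
    intro a b hab
    have hval : expo k 1 a = expo k 1 b := congrArg Fin.val hab
    have ha := a.isLt; have hb := b.isLt
    unfold expo at hval
    apply Fin.ext
    split at hval <;> split at hval <;> omega
  have hu'small : ∀ (d : Fin (k + 1)) (hd : (d : ℕ) < k - 1), u' d = v ⟨(d : ℕ), by omega⟩ := by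
    intro d hd
    show (if h : (d : ℕ) < k - 1 then v ⟨(d : ℕ), by omega⟩
      else if (d : ℕ) = k then v ⟨k - 1, by omega⟩ else 0) = _
    rw [dif_pos hd]
  have hu'k : ∀ (d : Fin (k + 1)), (d : ℕ) = k → u' d = v ⟨k - 1, by omega⟩ := by
    intro d hd
    show (if h : (d : ℕ) < k - 1 then v ⟨(d : ℕ), by omega⟩
      else if (d : ℕ) = k then v ⟨k - 1, by omega⟩ else 0) = _
    rw [dif_neg (by omega), if_pos hd]
  have hu'0 : ∀ (d : Fin (k + 1)), ¬ (d : ℕ) < k - 1 → (d : ℕ) ≠ k → u' d = 0 := by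
    intro d h h'
    show (if hh : (d : ℕ) < k - 1 then v ⟨(d : ℕ), by omega⟩
      else if (d : ℕ) = k then v ⟨k - 1, by omega⟩ else 0) = _
    rw [dif_neg h, if_neg h']
  have hexpo_small : ∀ i : Fin k, (i : ℕ) < k - 1 → expo k 1 i = (i : ℕ) := by
    intro i h; simp [expo, h]
  have hexpo_big : ∀ i : Fin k, ¬ (i : ℕ) < k - 1 → expo k 1 i = k := by
    intro i h
    have := i.isLt
    simp only [expo, if_neg h]
    omega
  have h1 : ∀ i, u' (e i) = v i := by
    intro i
    by_cases hik : (i : ℕ) < k - 1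
    · rw [hu'small (e i) (by show expo k 1 i < k - 1; rw [hexpo_small i hik]; exact hik)]
      exact congrArg v (Fin.ext (by show expo k 1 i = (i : ℕ); exact hexpo_small i hik))
    · rw [hu'k (e i) (by show expo k 1 i = k; exact hexpo_big i hik)]
      refine congrArg v (Fin.ext ?_)
      show k - 1 = (i : ℕ)
      have := i.isLt
      omega
  have h2 : ∀ d : Fin (k + 1), (∀ i, e i ≠ d) → u' d = 0 := by
    intro d hd
    by_cases hsm : (d : ℕ) < k - 1
    · exfalso
      apply hd ⟨(d : ℕ), by omega⟩
      apply Fin.ext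
      show expo k 1 _ = (d : ℕ)
      rw [hexpo_small _ (by simpa using hsm)]
    · by_cases hdk : (d : ℕ) = k
      · exfalso
        apply hd ⟨k - 1, by omega⟩
        apply Fin.ext
        show expo k 1 _ = (d : ℕ)
        rw [hexpo_big _ (by simp)]
        omega
      · exact hu'0 d hsm hdk
  set P : F[X] := polyOf u' with hP
  have hPeval : ∀ x : F, P.eval x = ∑ i : Fin k, v i * x ^ (expo k 1 i) := by
    intro x
    rw [hP, polyOf_eval]
    exact sum_reindex e he v u' h1 h2 (fun d => x ^ (d : ℕ))
  have hvne : ∃ i, v i ≠ 0 := by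
    by_contra hall
    push_neg at hall
    exact hv0 (funext hall)
  have hPne : P ≠ 0 := by
    intro h0
    rw [hP, polyOf_eq_zero_iff] at h0
    obtain ⟨i, hi⟩ := hvne
    exact hi (by rw [← h1 i, h0]; rfl)
  -- evaluation at columns with index < n
  have hGval : ∀ (j : Fin k) (hj : ((c j : ℕ)) < n),
      ∀ i, (G1 α k 1) i (c j) = (((c j : ℕ) : F)) ^ (expo k 1 i) := by
    intro j hj i
    show (if hj' : ((c j : ℕ)) < n then α ⟨(c j : ℕ), hj'⟩ ^ expo k 1 i
      else if (i : ℕ) = k - 1 then 1 else 0) = _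
    rw [dif_pos hj]
  have hPzero : ∀ (j : Fin k), ((c j : ℕ)) < n → P.eval (((c j : ℕ)) : F) = 0 := by
    intro j hj
    rw [hPeval]
    rw [← heq j]
    exact Finset.sum_congr rfl fun i _ => by rw [hGval j hj i]
  by_cases hB : ∃ j0 : Fin k, ((c j0 : ℕ)) = n
  · -- case B : one column is the appended column
    obtain ⟨j0, hj0⟩ := hB
    have hltB : ∀ j, j ≠ j0 → ((c j : ℕ)) < n := by
      intro j hj
      have h1 := (c j).isLt
      have h2 : c j ≠ c j0 := fun hcc => hj (hc hcc)
      have : ((c j : ℕ)) ≠ n := by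
        intro hn
        exact h2 (Fin.ext (by omega))
      omega
    have hvk : v ⟨k - 1, by omega⟩ = 0 := by
      have h0 := heq j0
      have hval : ∀ i : Fin k, (G1 α k 1) i (c j0) = if (i : ℕ) = k - 1 then 1 else 0 := by
        intro i
        show (if hj' : ((c j0 : ℕ)) < n then α ⟨(c j0 : ℕ), hj'⟩ ^ expo k 1 i
          else if (i : ℕ) = k - 1 then 1 else 0) = _
        rw [dif_neg (by omega)]
      rw [Finset.sum_congr rfl (fun i _ => by rw [hval i])] at h0
      rw [Finset.sum_eq_single (⟨k - 1, by omega⟩ : Fin k)] at h0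
      · simpa using h0
      · intro b _ hb
        have : (b : ℕ) ≠ k - 1 := fun hbv => hb (Fin.ext (by simpa using hbv))
        simp [this]
      · simp
    have hdeg : P.degree < ((k - 1 : ℕ) : WithBot ℕ) := by
      rw [hP]
      refine polyOf_degree_lt_of u' (by omega) ?_
      intro d hd
      have hdlt := d.isLt
      by_cases hdk : (d : ℕ) = k
      · rw [hu'k d hdk]; exact hvk
      · exact hu'0 d (by omega) hdk
    set s : Finset F := (Finset.univ.erase j0).image (fun j => (((c j : ℕ)) : F)) with hs
    have hscard : s.card = k - 1 := by
      rw [hs, Finset.card_image_of_injOn, Finset.card_erase_of_mem (Finset.mem_univ _),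
        Finset.card_univ, Fintype.card_fin]
      intro a ha b hb hab
      have ha' := hltB a (Finset.ne_of_mem_erase ha)
      have hb' := hltB b (Finset.ne_of_mem_erase hb)
      exact hc (Fin.ext (cast_inj_lt (by omega) (by omega) hab))
    have hPz : P = 0 := by
      apply Polynomial.eq_zero_of_degree_lt_of_eval_finset_eq_zero s
      · rw [hscard]; exact_mod_cast hdeg
      · intro x hx
        obtain ⟨j, hj, rfl⟩ := Finset.mem_image.1 hx
        exact hPzero j (hltB j (Finset.ne_of_mem_erase hj))
    exact hPne hPz
  · -- case A : all columns are evaluation columns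
    push_neg at hB
    have hlt : ∀ j, ((c j : ℕ)) < n := by
      intro j
      have := (c j).isLt
      have := hB j
      omega
    set x : Fin k → F := fun j => (((c j : ℕ)) : F) with hx
    have hxinj : Function.Injective x := by
      intro a b hab
      exact hc (Fin.ext (cast_inj_lt (by have := hlt a; omega) (by have := hlt b; omega) hab))
    set s : Finset F := Finset.univ.image x with hs
    have hscard : s.card = k := by
      rw [hs, Finset.card_image_of_injective _ hxinj, Finset.card_univ, Fintype.card_fin]
    have hPzs : ∀ y ∈ s, P.eval y = 0 := by
      intro y hy
      obtain ⟨j, _, rfl⟩ := Finset.mem_image.1 hy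
      exact hPzero j (hlt j)
    by_cases hvk : v ⟨k - 1, by omega⟩ = 0
    · have hdeg : P.degree < ((k - 1 : ℕ) : WithBot ℕ) := by
        rw [hP]
        refine polyOf_degree_lt_of u' (by omega) ?_
        intro d hd
        have hdlt := d.isLt
        by_cases hdk : (d : ℕ) = k
        · rw [hu'k d hdk]; exact hvk
        · exact hu'0 d (by omega) hdk
      have hPz : P = 0 := by
        apply Polynomial.eq_zero_of_degree_lt_of_eval_finset_eq_zero s
        · rw [hscard]
          refine lt_of_lt_of_le hdeg ?_
          exact_mod_cast (by omega : k - 1 ≤ k)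
        · exact hPzs
      exact hPne hPz
    · -- leading coefficient nonzero: Vieta argument
      set W : F[X] := ∏ j : Fin k, (X - C (x j)) with hW
      have hWmonic : W.Monic := monic_prod_of_monic _ _ (fun j _ => monic_X_sub_C (x j))
      have hWdeg : W.natDegree = k := by
        rw [hW, natDegree_prod _ _ (fun j _ => X_sub_C_ne_zero (x j))]
        simp [natDegree_X_sub_C]
      set D : F[X] := P - C (v ⟨k - 1, by omega⟩) * W with hD
      have hPcoeffk : P.coeff k = v ⟨k - 1, by omega⟩ := by
        rw [hP, polyOf_coeff, dif_pos (by omega : k < k + 1), hu'k _ rfl]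
      have hDdeg : D.degree < ((k : ℕ) : WithBot ℕ) := by
        rw [Polynomial.degree_lt_iff_coeff_zero]
        intro m hm
        have hm' : k ≤ m := by exact_mod_cast hm
        rw [hD, Polynomial.coeff_sub, Polynomial.coeff_C_mul]
        rcases eq_or_lt_of_le hm' with rfl | hmk
        · rw [hPcoeffk]
          have hWk : W.coeff k = 1 := by
            have := hWmonic.coeff_natDegree
            rwa [hWdeg] at this
          rw [hWk, mul_one, sub_self]
        · rw [hP, polyOf_coeff, dif_neg (by omega)]
          rw [Polynomial.coeff_eq_zero_of_natDegree_lt (by omega : W.natDegree < m), mul_zero,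
            sub_self]

      have hDz : D = 0 := by
        apply Polynomial.eq_zero_of_degree_lt_of_eval_finset_eq_zero s
        · rw [hscard]; exact hDdeg
        · intro y hy
          obtain ⟨j, _, rfl⟩ := Finset.mem_image.1 hy
          have hev1 : P.eval (x j) = 0 := hPzs _ hy
          have hev2 : W.eval (x j) = 0 := by
            rw [hW, Polynomial.eval_prod]
            exact Finset.prod_eq_zero (Finset.mem_univ j) (by simp)
          rw [hD, Polynomial.eval_sub, Polynomial.eval_mul, Polynomial.eval_C, hev1, hev2,
            mul_zero, sub_zero]
      have hPW : P = C (v ⟨k - 1, by omega⟩) * W := by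
        have := sub_eq_zero.mp hDz
        exact this
      -- compare coefficient k-1
      have hWcoeff : W.coeff (k - 1) = -∑ j, x j := by
        have hcard : (Finset.univ : Finset (Fin k)).card = k := by simp
        have := Polynomial.prod_X_sub_C_coeff_card_pred (Finset.univ : Finset (Fin k)) x
          (by rw [hcard]; omega)
        rw [hcard] at this
        exact this
      have hPcoeffk1 : P.coeff (k - 1) = 0 := by
        rw [hP, polyOf_coeff, dif_pos (by omega : k - 1 < k + 1)]
        exact hu'0 _ (by simp) (by simp; omega)
      have hsum0 : ∑ j, x j = 0 := by
        have := congrArg (fun q => Polynomial.coeff q (k - 1)) hPW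
        simp only [Polynomial.coeff_C_mul, hPcoeffk1, hWcoeff] at this
        have h2 : v ⟨k - 1, by omega⟩ * (∑ j, x j) = 0 := by
          rw [← neg_eq_zero]
          rw [← mul_neg]
          exact this.symm
        rcases mul_eq_zero.mp h2 with h | h
        · exact absurd h hvk
        · exact h
      have hsumne := subset_sum_ne_zero p k n hk hkn hstrict (fun j => ((c j : ℕ)))
        (fun a b hab => hc (Fin.ext hab)) hlt
      apply hsumne
      rw [← hsum0, hx, Nat.cast_sum]
  
end MDS

section NonGRS

variable {F : Type*} [Field F] {m : ℕ}

/-- componentwise products of pairs from a set -/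
def schurSet (S : Set (Fin m → F)) : Set (Fin m → F) := {y | ∃ a ∈ S, ∃ b ∈ S, y = a * b}

/-- the monomial transformation as a linear equivalence -/
def monLE (lam : Fin m → F) (hlam : ∀ i, lam i ≠ 0) (π : Equiv.Perm (Fin m)) :
    (Fin m → F) ≃ₗ[F] (Fin m → F) where
  toFun x := fun i => lam i * x (π i)
  invFun y := fun i => (lam (π.symm i))⁻¹ * y (π.symm i)
  left_inv x := by
    funext i
    dsimp only
    rw [Equiv.apply_symm_apply, ← mul_assoc, inv_mul_cancel₀ (hlam _), one_mul]
  right_inv y := by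
    funext i
    dsimp only
    rw [Equiv.symm_apply_apply, ← mul_assoc, mul_inv_cancel₀ (hlam _), one_mul]
  map_add' x y := by funext i; rw [Pi.add_apply, mul_add]; rfl
  map_smul' a x := by
    funext i
    rw [Pi.smul_apply, Pi.smul_apply, smul_eq_mul, smul_eq_mul, RingHom.id_apply]
    ring

lemma monLE_image (C : Set (Fin m → F)) (lam : Fin m → F) (hlam : ∀ i, lam i ≠ 0)
    (π : Equiv.Perm (Fin m)) :
    {y | ∃ c ∈ C, ∀ i, y i = lam i * c (π i)} = (monLE lam hlam π) '' C := by
  ext y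
  constructor
  · rintro ⟨c, hc, hy⟩
    exact ⟨c, hc, (funext fun i => (hy i).symm)⟩
  · rintro ⟨c, hc, rfl⟩
    exact ⟨c, hc, fun i => rfl⟩

lemma schurSet_image (C : Set (Fin m → F)) (lam : Fin m → F) (hlam : ∀ i, lam i ≠ 0)
    (π : Equiv.Perm (Fin m)) :
    schurSet ((monLE lam hlam π) '' C) =
      (monLE (fun i => lam i * lam i) (fun i => mul_ne_zero (hlam i) (hlam i)) π) ''
        schurSet C := by
  ext y
  constructor
  · rintro ⟨a, ⟨ca, hca, rfl⟩, b, ⟨cb, hcb, rfl⟩, rfl⟩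
    refine ⟨ca * cb, ⟨ca, hca, cb, hcb, rfl⟩, ?_⟩
    funext i
    show (fun i => lam i * lam i * (ca * cb) (π i)) i =
      ((fun i => lam i * ca (π i)) * (fun i => lam i * cb (π i))) i
    simp only [Pi.mul_apply]
    ring
  · rintro ⟨z, ⟨a, ha, b, hb, rfl⟩, rfl⟩
    refine ⟨(monLE lam hlam π) a, ⟨a, ha, rfl⟩, (monLE lam hlam π) b, ⟨b, hb, rfl⟩, ?_⟩
    funext i
    show lam i * lam i * (a * b) (π i) =
      ((fun i => lam i * a (π i)) * (fun i => lam i * b (π i))) i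
    simp only [Pi.mul_apply]
    ring

end NonGRS

section GRS

variable {F : Type*} [Field F] [DecidableEq F] {m : ℕ}

open Polynomial

/-- the GRS code as a set -/
def grsSet (kk : ℕ) (β : Fin m → Option F) (v : Fin m → F) : Set (Fin m → F) :=
  {c | ∃ f : Polynomial F, f.degree < (kk : WithBot ℕ) ∧
      ∀ i, c i = v i * (match β i with
        | some x => Polynomial.eval x f
        | none => f.coeff (kk - 1))}

/-- finset of finite evaluation points -/
def rootsF (β : Fin m → Option F) : Finset F :=
  Finset.univ.biUnion (fun i => (β i).toFinset)

lemma mem_rootsF {β : Fin m → Option F} {x : F} :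
    x ∈ rootsF β ↔ ∃ i, β i = some x := by
  simp only [rootsF, Finset.mem_biUnion, Finset.mem_univ, true_and, Option.mem_toFinset]
  rfl

lemma card_rootsF_no_none {β : Fin m → Option F} (hβ : Function.Injective β)
    (h : ∀ i, β i ≠ none) :
    (rootsF β).card = m := by
  rw [rootsF, Finset.card_biUnion]
  · have : ∀ i : Fin m, ((β i).toFinset).card = 1 := by
      intro i
      cases hβi : β i with
      | none => exact absurd hβi (h i)
      | some x => simp [hβi]
    rw [Finset.sum_congr rfl (fun i _ => this i)]
    simp
  · intro i _ j _ hij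
    rw [Function.onFun, Finset.disjoint_left]
    intro a hai haj
    rw [Option.mem_toFinset, Option.mem_def] at hai haj
    exact hij (hβ (hai.trans haj.symm))

lemma card_rootsF_one_none {β : Fin m → Option F} (hβ : Function.Injective β)
    {i0 : Fin m} (h0 : β i0 = none) : (rootsF β).card = m - 1 := by
  rw [rootsF, Finset.card_biUnion]
  · rw [← Finset.add_sum_erase _ _ (Finset.mem_univ i0)]
    have h1 : ((β i0).toFinset).card = 0 := by rw [h0]; rfl
    have h2 : ∀ i ∈ Finset.univ.erase i0, ((β i).toFinset).card = 1 := by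
      intro i hi
      cases hβi : β i with
      | none => exact absurd (hβ (hβi.trans h0.symm)) (Finset.ne_of_mem_erase hi)
      | some x => simp [hβi]
    rw [h1, Finset.sum_congr rfl h2]
    simp [Finset.card_erase_of_mem]
  · intro i _ j _ hij
    rw [Function.onFun, Finset.disjoint_left]
    intro a hai haj
    rw [Option.mem_toFinset, Option.mem_def] at hai haj
    exact hij (hβ (hai.trans haj.symm))

lemma grs_finrank_ge (kk : ℕ) (hkk1 : 2 ≤ kk) (hkkm : kk ≤ m)
    (β : Fin m → Option F) (v : Fin m → F) (hβ : Function.Injective β)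
    (hv : ∀ i, v i ≠ 0) :
    kk ≤ Module.finrank F (Submodule.span F (grsSet kk β v)) := by
  classical
  set Y : Fin kk → (Fin m → F) := fun e => fun i =>
    v i * (match β i with
      | some x => x ^ (e : ℕ)
      | none => if kk - 1 = (e : ℕ) then 1 else 0) with hY
  have hYmem : ∀ e, Y e ∈ grsSet kk β v := by
    intro e
    refine ⟨X ^ (e : ℕ), ?_, ?_⟩
    · rw [degree_X_pow]
      exact_mod_cast e.isLt
    · intro i
      show v i * _ = v i * _
      congr 1
      cases hβi : β i with
      | some x => simp [hβi]
      | none => simp [hβi, coeff_X_pow]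
  have hYindep : LinearIndependent F Y := by
    rw [Fintype.linearIndependent_iff]
    intro u hu
    have hcoord : ∀ i, ∑ e : Fin kk, u e * Y e i = 0 := by
      intro i
      have h0 := congrFun hu i
      rw [Finset.sum_apply] at h0
      simpa only [Pi.smul_apply, smul_eq_mul, Pi.zero_apply] using h0
    have hpt1 : ∀ i x, β i = some x → (polyOf u).eval x = 0 := by
      intro i x hβi
      have h0 := hcoord i
      simp only [hY, hβi] at h0
      have h1 : v i * ∑ e : Fin kk, u e * x ^ (e : ℕ) = 0 := by
        rw [Finset.mul_sum, ← h0]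
        exact Finset.sum_congr rfl fun e _ => by ring
      rcases mul_eq_zero.1 h1 with h | h
      · exact absurd h (hv i)
      · rw [polyOf_eval]; exact h
    have hpt2 : ∀ i, β i = none → u ⟨kk - 1, by omega⟩ = 0 := by
      intro i hβi
      have h0 := hcoord i
      simp only [hY, hβi] at h0
      have h1 : v i * u ⟨kk - 1, by omega⟩ = 0 := by
        rw [← h0]
        rw [Finset.sum_eq_single (⟨kk - 1, by omega⟩ : Fin kk)]
        · simp
          ring
        · intro b _ hb
          have : kk - 1 ≠ (b : ℕ) := by
            intro hc
            exact hb (Fin.ext hc.symm)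
          simp [this]
        · simp
      rcases mul_eq_zero.1 h1 with h | h
      · exact absurd h (hv i)
      · exact h
    have hroots : ∀ x ∈ rootsF β, (polyOf u).eval x = 0 := by
      intro x hx
      obtain ⟨i, hi⟩ := mem_rootsF.1 hx
      exact hpt1 i x hi
    have hg0 : polyOf u = 0 := by
      by_cases hnone : ∃ i0, β i0 = none
      · obtain ⟨i0, hi0⟩ := hnone
        have hcard : (rootsF β).card = m - 1 := card_rootsF_one_none hβ hi0
        have hutop : u ⟨kk - 1, by omega⟩ = 0 := hpt2 i0 hi0
        have hdeg : (polyOf u).degree < ((kk - 1 : ℕ) : WithBot ℕ) := by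
          apply polyOf_degree_lt_of u (by omega)
          intro d hd
          have hdlt := d.isLt
          have : d = (⟨kk - 1, by omega⟩ : Fin kk) := by
            apply Fin.ext
            show (d : ℕ) = kk - 1
            omega
          rw [this]
          exact hutop
        apply Polynomial.eq_zero_of_degree_lt_of_eval_finset_eq_zero _ _ hroots
        rw [hcard]
        have hle2 : ((kk - 1 : ℕ) : WithBot ℕ) ≤ ((m - 1 : ℕ) : WithBot ℕ) := by
          have h9 : kk - 1 ≤ m - 1 := by omega
          exact_mod_cast h9
        exact lt_of_lt_of_le hdeg hle2
      · push_neg at hnone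
        have hcard : (rootsF β).card = m := card_rootsF_no_none hβ hnone
        apply Polynomial.eq_zero_of_degree_lt_of_eval_finset_eq_zero _ _ hroots
        rw [hcard]
        exact lt_of_lt_of_le (polyOf_degree_lt u (by omega)) (by exact_mod_cast hkkm)
    intro e
    have := (polyOf_eq_zero_iff u).1 hg0
    exact congrFun this e
  have h1 : Module.finrank F (Submodule.span F (Set.range Y)) = kk := by
    rw [finrank_span_eq_card hYindep, Fintype.card_fin]
  have h2 : Submodule.span F (Set.range Y) ≤ Submodule.span F (grsSet kk β v) :=
    Submodule.span_mono (by rintro y ⟨e, rfl⟩; exact hYmem e)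
  exact le_trans (le_of_eq h1.symm) (Submodule.finrank_mono h2)

lemma grs_schur_finrank_le (kk : ℕ) (hkk1 : 1 ≤ kk)
    (β : Fin m → Option F) (v : Fin m → F) :
    Module.finrank F (Submodule.span F (schurSet (grsSet kk β v))) ≤ 2 * kk - 1 := by
  classical
  set w : Fin (2 * kk - 1) → (Fin m → F) := fun e => fun i =>
    v i * v i * (match β i with
      | some x => x ^ (e : ℕ)
      | none => if (e : ℕ) = 2 * kk - 2 then 1 else 0) with hw
  have hsub : schurSet (grsSet kk β v) ⊆ ↑(Submodule.span F (Set.range w)) := by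
    rintro y ⟨a, ⟨f, hfd, hfa⟩, b, ⟨g, hgd, hgb⟩, rfl⟩
    have hfnd : f.natDegree ≤ kk - 1 := by
      by_cases hf0 : f = 0
      · simp [hf0]
      · have := (Polynomial.natDegree_lt_iff_degree_lt hf0).2 hfd
        omega
    have hgnd : g.natDegree ≤ kk - 1 := by
      by_cases hg0 : g = 0
      · simp [hg0]
      · have := (Polynomial.natDegree_lt_iff_degree_lt hg0).2 hgd
        omega
    have hprodnd : (f * g).natDegree < 2 * kk - 1 :=
      lt_of_le_of_lt Polynomial.natDegree_mul_le (by omega)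
    have hab : a * b = ∑ e : Fin (2 * kk - 1), (f * g).coeff (e : ℕ) • w e := by
      funext i
      rw [Pi.mul_apply, hfa i, hgb i, Finset.sum_apply]
      simp only [Pi.smul_apply, smul_eq_mul]
      cases hβi : β i with
      | some x =>
        simp only [hw, hβi]
        have heval : (f * g).eval x = ∑ e : Fin (2 * kk - 1), (f * g).coeff (e : ℕ) * x ^ (e : ℕ) := by
          rw [Polynomial.eval_eq_sum_range' hprodnd, Finset.sum_range fun e => (f * g).coeff e * x ^ e]
        calc v i * f.eval x * (v i * g.eval x)
            = v i * v i * (f * g).eval x := by rw [Polynomial.eval_mul]; ring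
          _ = ∑ e : Fin (2 * kk - 1), (f * g).coeff (e : ℕ) * (v i * v i * x ^ (e : ℕ)) := by
              rw [heval, Finset.mul_sum]
              exact Finset.sum_congr rfl fun e _ => by ring
      | none =>
        simp only [hw, hβi]
        have htop : (f * g).coeff (2 * kk - 2) = f.coeff (kk - 1) * g.coeff (kk - 1) := by
          have h2 : 2 * kk - 2 = (kk - 1) + (kk - 1) := by omega
          rw [h2, coeff_mul_top hfnd hgnd]
        rw [Finset.sum_eq_single (⟨2 * kk - 2, by omega⟩ : Fin (2 * kk - 1))]
        · have hval : ((⟨2 * kk - 2, by omega⟩ : Fin (2 * kk - 1)) : ℕ) = 2 * kk - 2 := rfl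
          rw [hval, if_pos rfl, htop]
          ring
        · intro b' _ hb'
          have : (b' : ℕ) ≠ 2 * kk - 2 := by
            intro hc
            exact hb' (Fin.ext hc)
          simp [this]
        · simp
    rw [hab]
    apply Submodule.sum_mem
    intro e _
    exact Submodule.smul_mem _ _ (Submodule.subset_span ⟨e, rfl⟩)
  have h1 : Submodule.span F (schurSet (grsSet kk β v)) ≤ Submodule.span F (Set.range w) := by
    rw [Submodule.span_le]
    exact hsub
  refine le_trans (Submodule.finrank_mono h1) ?_
  refine le_trans (finrank_span_le_card (Set.range w)) ?_
  rw [Set.toFinset_range]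
  exact le_trans Finset.card_image_le (by simp)

end GRS

section Part2

open Polynomial Module

lemma expo_small' (k : ℕ) (i : Fin k) (h : (i : ℕ) < k - 1) : expo k 1 i = (i : ℕ) := by
  simp [expo, h]

lemma expo_big' (k : ℕ) (i : Fin k) (h : ¬ (i : ℕ) < k - 1) : expo k 1 i = k := by
  have := i.isLt
  simp only [expo, if_neg h]
  omega

lemma G1_row_mul {F : Type*} [Field F] {n : ℕ} (α : Fin n → F) (k : ℕ) (a b : Fin k)
    (j : Fin (n + 1)) :
    (G1 α k 1 a j) * (G1 α k 1 b j) =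
      if hj : (j : ℕ) < n then α ⟨j, hj⟩ ^ (expo k 1 a + expo k 1 b)
      else (if (a : ℕ) = k - 1 ∧ (b : ℕ) = k - 1 then 1 else 0) := by
  show (if hj : (j : ℕ) < n then α ⟨(j : ℕ), hj⟩ ^ expo k 1 a
      else if (a : ℕ) = k - 1 then 1 else 0) *
    (if hj : (j : ℕ) < n then α ⟨(j : ℕ), hj⟩ ^ expo k 1 b
      else if (b : ℕ) = k - 1 then 1 else 0) = _
  by_cases hj : (j : ℕ) < n
  · rw [dif_pos hj, dif_pos hj, dif_pos hj, pow_add]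
  · rw [dif_neg hj, dif_neg hj, dif_neg hj]
    by_cases ha : (a : ℕ) = k - 1 <;> by_cases hb : (b : ℕ) = k - 1 <;>
      simp [ha, hb]

set_option maxHeartbeats 2000000 in
lemma part2 {p : ℕ} [hpf : Fact p.Prime] (k n : ℕ) (hk : 3 ≤ k) (hkn : 2 * k ≤ n)
    (hnp : n < p) (kk : ℕ) (hkk2 : 2 ≤ kk) (hkkn : kk ≤ n + 1)
    (C' : Set (Fin (n + 1) → ZMod p)) (hGRS : isGRS (n + 1) kk C') :
    ¬ monEquiv
      ((rowSpan (G1 (fun i : Fin n => ((i : ℕ) : ZMod p)) k 1) :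
          Submodule (ZMod p) (Fin (n + 1) → ZMod p)) : Set (Fin (n + 1) → ZMod p)) C' := by
  intro hmon
  obtain ⟨π, lam, hlam, hC'⟩ := hmon
  obtain ⟨β, v, hβ, hv, hCeq⟩ := hGRS
  have hCgrs : C' = grsSet kk β v := hCeq
  set α : Fin n → (ZMod p) := fun i => ((i : ℕ) : (ZMod p)) with hα
  have hαinj : Function.Injective α := fun a b h =>
    Fin.ext (cast_inj_lt (lt_trans a.isLt hnp) (lt_trans b.isLt hnp) h)
  set Csub : Submodule (ZMod p) (Fin (n + 1) → (ZMod p)) := rowSpan (G1 α k 1) with hCsub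
  have hC'img : C' = ⇑(monLE lam hlam π) '' (Csub : Set (Fin (n + 1) → (ZMod p))) := by
    rw [hC']
    exact monLE_image _ _ _ _
  -- step 1 : kk ≤ k
  have hfr1 : kk ≤ finrank (ZMod p) (Submodule.span (ZMod p) (grsSet kk β v)) :=
    grs_finrank_ge kk hkk2 hkkn β v hβ hv
  have hspan1 : Submodule.span (ZMod p) C' =
      Submodule.map (↑(monLE lam hlam π) : (Fin (n + 1) → (ZMod p)) →ₗ[(ZMod p)] (Fin (n + 1) → (ZMod p))) Csub := by
    rw [hC'img, Submodule.span_image_linearEquiv, Submodule.span_eq]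
  have hfrC' : finrank (ZMod p) (Submodule.span (ZMod p) C') = finrank (ZMod p) Csub := by
    rw [hspan1]
    exact LinearEquiv.finrank_map_eq _ _
  have hfrCsub : finrank (ZMod p) Csub ≤ k := by
    have h := finrank_range_le_card (R := (ZMod p)) (fun i : Fin k => G1 α k 1 i)
    rw [Fintype.card_fin] at h
    exact h
  have hkkk : kk ≤ k := by
    have := hfr1
    rw [← hCgrs, hfrC'] at this
    omega
  -- step 2 : Schur square dimensions
  set wexp : Fin (2 * k) → ℕ := fun t => if (t : ℕ) < 2 * k - 1 then (t : ℕ) else 2 * k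
    with hwexp
  set W : Fin (2 * k) → (Fin (n + 1) → (ZMod p)) := fun t => fun j =>
    if hj : (j : ℕ) < n then α ⟨(j : ℕ), hj⟩ ^ (wexp t)
    else (if (t : ℕ) = 2 * k - 1 then 1 else 0) with hW
  have hwexp_pos : ∀ t : Fin (2 * k), wexp t =
      if (t : ℕ) < 2 * k - 1 then (t : ℕ) else 2 * k := fun t => rfl
  have hWmem : ∀ t, W t ∈ schurSet (Csub : Set (Fin (n + 1) → (ZMod p))) := by
    intro t
    have ht := t.isLt
    have hab : ∃ a b : Fin k, expo k 1 a + expo k 1 b = wexp t ∧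
        (((a : ℕ) = k - 1 ∧ (b : ℕ) = k - 1) ↔ (t : ℕ) = 2 * k - 1) := by
      by_cases h1 : (t : ℕ) < 2 * k - 1
      · by_cases h2 : (t : ℕ) ≤ 2 * k - 4
        · refine ⟨⟨min (t : ℕ) (k - 2), by omega⟩, ⟨(t : ℕ) - min (t : ℕ) (k - 2), by omega⟩,
            ?_, ?_⟩
          · rw [expo_small' k (⟨min (t : ℕ) (k - 2), by omega⟩ : Fin k)
                (by show min (t : ℕ) (k - 2) < k - 1; omega),
              expo_small' k (⟨(t : ℕ) - min (t : ℕ) (k - 2), by omega⟩ : Fin k)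
                (by show (t : ℕ) - min (t : ℕ) (k - 2) < k - 1; omega)]
            rw [hwexp_pos t, if_pos h1]
            show min (t : ℕ) (k - 2) + ((t : ℕ) - min (t : ℕ) (k - 2)) = (t : ℕ)
            omega
          · constructor
            · rintro ⟨ha, hb⟩
              exfalso
              have : min (t : ℕ) (k - 2) = k - 1 := ha
              omega
            · intro hteq
              exfalso
              omega
        · by_cases h3 : (t : ℕ) = 2 * k - 3
          · refine ⟨⟨k - 3, by omega⟩, ⟨k - 1, by omega⟩, ?_, ?_⟩
            · rw [expo_small' k (⟨k - 3, by omega⟩ : Fin k) (by show k - 3 < k - 1; omega),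
                expo_big' k (⟨k - 1, by omega⟩ : Fin k) (by show ¬ k - 1 < k - 1; omega)]
              rw [hwexp_pos t, if_pos h1]
              show k - 3 + k = (t : ℕ)
              omega
            · constructor
              · rintro ⟨ha, hb⟩
                exfalso
                have : k - 3 = k - 1 := ha
                omega
              · intro hteq
                exfalso
                omega
          · have h4 : (t : ℕ) = 2 * k - 2 := by omega
            refine ⟨⟨k - 2, by omega⟩, ⟨k - 1, by omega⟩, ?_, ?_⟩
            · rw [expo_small' k (⟨k - 2, by omega⟩ : Fin k) (by show k - 2 < k - 1; omega),
                expo_big' k (⟨k - 1, by omega⟩ : Fin k) (by show ¬ k - 1 < k - 1; omega)]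
              rw [hwexp_pos t, if_pos h1]
              show k - 2 + k = (t : ℕ)
              omega
            · constructor
              · rintro ⟨ha, hb⟩
                exfalso
                have : k - 2 = k - 1 := ha
                omega
              · intro hteq
                exfalso
                omega
      · have h5 : (t : ℕ) = 2 * k - 1 := by omega
        refine ⟨⟨k - 1, by omega⟩, ⟨k - 1, by omega⟩, ?_, ?_⟩
        · rw [expo_big' k (⟨k - 1, by omega⟩ : Fin k) (by show ¬ k - 1 < k - 1; omega)]
          rw [hwexp_pos t, if_neg h1]
          omega
        · constructor
          · intro _
            exact h5
          · intro _
            exact ⟨rfl, rfl⟩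
    obtain ⟨a, b, hsum, hiff⟩ := hab
    refine ⟨G1 α k 1 a, Submodule.subset_span (Set.mem_range_self a),
      G1 α k 1 b, Submodule.subset_span (Set.mem_range_self b), ?_⟩
    funext j
    rw [Pi.mul_apply, G1_row_mul]
    show (if hj : (j : ℕ) < n then α ⟨(j : ℕ), hj⟩ ^ (wexp t)
      else (if (t : ℕ) = 2 * k - 1 then 1 else 0)) = _
    by_cases hj : (j : ℕ) < n
    · rw [dif_pos hj, dif_pos hj, hsum]
    · rw [dif_neg hj, dif_neg hj]
      by_cases hteq : (t : ℕ) = 2 * k - 1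
      · rw [if_pos hteq, if_pos (hiff.2 hteq)]
      · rw [if_neg hteq, if_neg (fun hc => hteq (hiff.1 hc))]
  have hWindep : LinearIndependent (ZMod p) W := by
    rw [Fintype.linearIndependent_iff]
    intro u hu
    have hcoord : ∀ j, ∑ t : Fin (2 * k), u t * W t j = 0 := by
      intro j
      have h0 := congrFun hu j
      rw [Finset.sum_apply] at h0
      simpa only [Pi.smul_apply, smul_eq_mul, Pi.zero_apply] using h0
    have hlast : u ⟨2 * k - 1, by omega⟩ = 0 := by
      have h0 := hcoord (Fin.last n)
      have hWlast : ∀ t, W t (Fin.last n) = (if (t : ℕ) = 2 * k - 1 then 1 else 0) := by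
        intro t
        show (if hj : ((Fin.last n : Fin (n + 1)) : ℕ) < n then _ else _) = _
        rw [dif_neg (by simp)]
      rw [Finset.sum_congr rfl (fun t _ => by rw [hWlast t])] at h0
      rw [Finset.sum_eq_single (⟨2 * k - 1, by omega⟩ : Fin (2 * k))] at h0
      · simpa using h0
      · intro b _ hb
        have : (b : ℕ) ≠ 2 * k - 1 := fun hbv => hb (Fin.ext (by simpa using hbv))
        simp [this]
      · simp
    set u'' : Fin (2 * k + 1) → (ZMod p) := fun d =>
      if h : (d : ℕ) < 2 * k - 1 then u ⟨(d : ℕ), by omega⟩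
      else if (d : ℕ) = 2 * k then u ⟨2 * k - 1, by omega⟩ else 0 with hu''
    have hu''small : ∀ (d : Fin (2 * k + 1)) (hd : (d : ℕ) < 2 * k - 1),
        u'' d = u ⟨(d : ℕ), by omega⟩ := by
      intro d hd
      show (if h : (d : ℕ) < 2 * k - 1 then u ⟨(d : ℕ), by omega⟩
        else if (d : ℕ) = 2 * k then u ⟨2 * k - 1, by omega⟩ else 0) = _
      rw [dif_pos hd]
    have hu''top : ∀ (d : Fin (2 * k + 1)), (d : ℕ) = 2 * k → u'' d = u ⟨2 * k - 1, by omega⟩ := by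
      intro d hd
      show (if h : (d : ℕ) < 2 * k - 1 then u ⟨(d : ℕ), by omega⟩
        else if (d : ℕ) = 2 * k then u ⟨2 * k - 1, by omega⟩ else 0) = _
      rw [dif_neg (by omega), if_pos hd]
    have hu''0 : ∀ (d : Fin (2 * k + 1)), ¬ (d : ℕ) < 2 * k - 1 → (d : ℕ) ≠ 2 * k →
        u'' d = 0 := by
      intro d h h'
      show (if hh : (d : ℕ) < 2 * k - 1 then u ⟨(d : ℕ), by omega⟩
        else if (d : ℕ) = 2 * k then u ⟨2 * k - 1, by omega⟩ else 0) = _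
      rw [dif_neg h, if_neg h']
    have hwexp_lt : ∀ t : Fin (2 * k), wexp t < 2 * k + 1 := by
      intro t
      have := t.isLt
      rw [hwexp_pos t]
      split <;> omega
    set e2 : Fin (2 * k) → Fin (2 * k + 1) := fun t => ⟨wexp t, hwexp_lt t⟩ with he2'
    have he2 : Function.Injective e2 := by
      intro a b hab
      have hval : wexp a = wexp b := congrArg Fin.val hab
      have ha := a.isLt; have hb := b.isLt
      rw [hwexp_pos a, hwexp_pos b] at hval
      apply Fin.ext
      split at hval <;> split at hval <;> omega
    have h1' : ∀ t, u'' (e2 t) = u t := by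
      intro t
      have ht := t.isLt
      by_cases h1 : (t : ℕ) < 2 * k - 1
      · rw [hu''small (e2 t) (by show wexp t < 2 * k - 1; rw [hwexp_pos t, if_pos h1]; omega)]
        refine congrArg u (Fin.ext ?_)
        show wexp t = (t : ℕ)
        rw [hwexp_pos t, if_pos h1]
      · rw [hu''top (e2 t) (by show wexp t = 2 * k; rw [hwexp_pos t, if_neg h1])]
        refine congrArg u (Fin.ext ?_)
        show 2 * k - 1 = (t : ℕ)
        omega
    have h2' : ∀ d : Fin (2 * k + 1), (∀ t, e2 t ≠ d) → u'' d = 0 := by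
      intro d hd
      by_cases hsm : (d : ℕ) < 2 * k - 1
      · exfalso
        apply hd ⟨(d : ℕ), by omega⟩
        apply Fin.ext
        show wexp _ = (d : ℕ)
        rw [hwexp_pos _,
          if_pos (show ((⟨(d : ℕ), by omega⟩ : Fin (2 * k)) : ℕ) < 2 * k - 1 from by
            simpa using hsm)]
      · by_cases hdk : (d : ℕ) = 2 * k
        · exfalso
          apply hd ⟨2 * k - 1, by omega⟩
          apply Fin.ext
          show wexp _ = (d : ℕ)
          rw [hwexp_pos _,
            if_neg (show ¬ ((⟨2 * k - 1, by omega⟩ : Fin (2 * k)) : ℕ) < 2 * k - 1 from by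
              simp)]
          omega
        · exact hu''0 d hsm hdk
    set g : (ZMod p)[X] := polyOf u'' with hg
    have hgeval : ∀ x : (ZMod p), g.eval x = ∑ t : Fin (2 * k), u t * x ^ (wexp t) := by
      intro x
      rw [hg, polyOf_eval]
      exact sum_reindex e2 he2 u u'' h1' h2' (fun d => x ^ (d : ℕ))
    have hroots : ∀ x ∈ Finset.univ.image α, g.eval x = 0 := by
      intro x hx
      obtain ⟨j, _, rfl⟩ := Finset.mem_image.1 hx
      rw [hgeval]
      have h0 := hcoord ⟨(j : ℕ), by omega⟩
      rw [← h0]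
      refine Finset.sum_congr rfl fun t _ => ?_
      congr 1
      show α j ^ (wexp t) = if hj : ((j : ℕ)) < n then α ⟨(j : ℕ), hj⟩ ^ (wexp t) else _
      rw [dif_pos j.isLt]
    have hdeg : g.degree < ((2 * k - 1 : ℕ) : WithBot ℕ) := by
      rw [hg]
      refine polyOf_degree_lt_of u'' (by omega) ?_
      intro d hd
      have hdlt := d.isLt
      by_cases hdk : (d : ℕ) = 2 * k
      · rw [hu''top d hdk]
        exact hlast
      · exact hu''0 d (by omega) hdk
    have hg0 : g = 0 := by
      apply Polynomial.eq_zero_of_degree_lt_of_eval_finset_eq_zero _ _ hroots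
      rw [Finset.card_image_of_injective _ hαinj, Finset.card_univ, Fintype.card_fin]
      refine lt_of_lt_of_le hdeg ?_
      have h9 : 2 * k - 1 ≤ n := by omega
      exact_mod_cast h9
    have hu''0all : u'' = 0 := (polyOf_eq_zero_iff u'').1 hg0
    intro t
    rw [← h1' t, hu''0all]
    rfl
  -- assemble
  have hsl : 2 * k ≤ finrank (ZMod p) (Submodule.span (ZMod p) (schurSet (Csub : Set (Fin (n + 1) → (ZMod p))))) := by
    have h1 : finrank (ZMod p) (Submodule.span (ZMod p) (Set.range W)) = 2 * k := by
      rw [finrank_span_eq_card hWindep, Fintype.card_fin]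
    have h2 : Submodule.span (ZMod p) (Set.range W) ≤
        Submodule.span (ZMod p) (schurSet (Csub : Set (Fin (n + 1) → (ZMod p)))) :=
      Submodule.span_mono (by rintro y ⟨t, rfl⟩; exact hWmem t)
    exact le_trans (le_of_eq h1.symm) (Submodule.finrank_mono h2)
  have hseq : finrank (ZMod p) (Submodule.span (ZMod p) (schurSet C')) =
      finrank (ZMod p) (Submodule.span (ZMod p) (schurSet (Csub : Set (Fin (n + 1) → (ZMod p))))) := by
    rw [hC'img, schurSet_image, Submodule.span_image_linearEquiv]
    exact LinearEquiv.finrank_map_eq _ _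
  have hsle : finrank (ZMod p) (Submodule.span (ZMod p) (schurSet C')) ≤ 2 * kk - 1 := by
    rw [hCgrs]
    exact grs_schur_finrank_le kk (by omega) β v
  omega

end Part2
end RLaux

/-- Corollary 4.8: for an odd prime `p` and `6 ≤ 2k ≤ n ≤ p/k + (k+1)/2`, taking
`α_i = i − 1` and `r = 1`, the code `C_1` is an `[n+1,k]` non-GRS MDS code over `F_p`. -/
theorem C1_nonGRS_MDS_prime (p : ℕ) [Fact p.Prime] (hodd : Odd p) (k n : ℕ)
    (h6 : 6 ≤ 2 * k) (hkn : 2 * k ≤ n)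
    (hbound : (n : ℚ) ≤ (p : ℚ) / (k : ℚ) + ((k : ℚ) + 1) / 2) :
    allSubNonsing (G1 (fun i : Fin n => ((i : ℕ) : ZMod p)) k 1) ∧
    ∀ (kk : ℕ), 2 ≤ kk → kk ≤ n + 1 → ∀ C' : Set (Fin (n + 1) → ZMod p),
      isGRS (n + 1) kk C' →
      ¬ monEquiv
        (rowSpan (G1 (fun i : Fin n => ((i : ℕ) : ZMod p)) k 1) : Set (Fin (n + 1) → ZMod p))
        C' := by
  have hk : 3 ≤ k := by omega
  have hstrict : 2 * (k * n) < 2 * p + (k * k + k) := RLaux.strict_bound p k n hk hkn hbound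
  have hnp : n < p := by
    have h0 : k * (k + 1) = k * k + k := by ring
    have h1 : k * (k + 1) ≤ k * n := Nat.mul_le_mul_left k (by omega)
    have h2 : 3 * n ≤ k * n := Nat.mul_le_mul_right n hk
    linarith
  constructor
  · exact RLaux.part1 k n hk hkn hstrict hnp
  · intro kk hkk2 hkkn C' hGRS
    exact RLaux.part2 k n hk hkn hnp kk hkk2 hkkn C' hGRS
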